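/- Uniform convergence of Lipschitz Monte Carlo approximations: under the assumptions that X is compact and the sampled objectives are uniformly Lipschitz with integrable Lipschitz random constant, the sample average approximation α̂_N(x) = (1/N) Σ φ(x, ε_i) converges to α(x) = E[φ(x, ε)] uniformly on X almost surely, and hence sup_X α̂_N → sup_X α almost surely. -/

import Mathlib

open MeasureTheory ProbabilityTheory Filter

private lemma exists_lipschitz_surrogate {d k : ℕ} (X : Set (EuclideanSpace ℝ (Fin d)))
    (hX : IsCompact X) (hXne : X.Nonempty)
    (φ : EuclideanSpace ℝ (Fin d) → EuclideanSpace ℝ (Fin k) → ℝ)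
    (hφ : Measurable (Function.uncurry φ))
    (ℓ : EuclideanSpace ℝ (Fin k) → ℝ) :
    ∃ g : EuclideanSpace ℝ (Fin k) → ℝ, Measurable g ∧ (∀ e, 0 ≤ g e) ∧
      ∀ e, (∀ x ∈ X, ∀ x' ∈ X, |φ x e - φ x' e| ≤ ℓ e * ‖x - x'‖) →
        ((∀ x ∈ X, ∀ x' ∈ X, |φ x e - φ x' e| ≤ g e * ‖x - x'‖) ∧ g e ≤ max (ℓ e) 0) := by
  classical
  have hφx : ∀ x, Measurable fun e => φ x e := fun x => hφ.comp measurable_prodMk_left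
  obtain ⟨D, hDX, hDc, hDd⟩ := EMetric.subset_countable_closure_of_compact hX
  have hDne : D.Nonempty := by
    rcases hXne with ⟨x0, hx0⟩
    by_contra h
    rw [Set.not_nonempty_iff_eq_empty] at h
    simpa [h] using hDd hx0
  obtain ⟨u, hu⟩ := Set.Countable.exists_eq_range hDc hDne
  have hux : ∀ n, u n ∈ X := fun n => hDX (hu ▸ Set.mem_range_self n)
  have hdense : ∀ x ∈ X, ∀ η : ℝ, 0 < η → ∃ n, ‖x - u n‖ < η := by
    intro x hx η hη
    have := Metric.mem_closure_iff.1 (hDd hx) η hη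
    obtain ⟨b, hb, hdist⟩ := this
    rw [hu] at hb; obtain ⟨n, rfl⟩ := hb
    exact ⟨n, by rwa [← dist_eq_norm]⟩
  set q : ℕ × ℕ → EuclideanSpace ℝ (Fin k) → ℝ :=
    fun p e => |φ (u p.1) e - φ (u p.2) e| / ‖u p.1 - u p.2‖ with hq
  set g : EuclideanSpace ℝ (Fin k) → ℝ :=
    fun e => (⨆ p : ℕ × ℕ, ENNReal.ofReal (q p e)).toReal with hgdef
  have hq0 : ∀ p e, 0 ≤ q p e := fun p e => div_nonneg (abs_nonneg _) (norm_nonneg _)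
  refine ⟨g, ?_, fun e => ENNReal.toReal_nonneg, ?_⟩
  · apply ENNReal.measurable_toReal.comp
    exact Measurable.iSup fun p =>
      ENNReal.measurable_ofReal.comp ((((hφx _).sub (hφx _)).abs).div_const _)
  intro e he
  have hbound : (⨆ p : ℕ × ℕ, ENNReal.ofReal (q p e)) ≤ ENNReal.ofReal (max (ℓ e) 0) := by
    refine iSup_le fun p => ENNReal.ofReal_le_ofReal ?_
    by_cases hp : u p.1 = u p.2
    · simp [hq, hp, le_max_right]
    · have hnorm : 0 < ‖u p.1 - u p.2‖ := by
        rw [norm_sub_pos_iff]; exact fun h => hp h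
      rw [hq]; dsimp only
      rw [div_le_iff₀ hnorm]
      calc |φ (u p.1) e - φ (u p.2) e| ≤ ℓ e * ‖u p.1 - u p.2‖ :=
            he _ (hux _) _ (hux _)
        _ ≤ max (ℓ e) 0 * ‖u p.1 - u p.2‖ :=
            mul_le_mul_of_nonneg_right (le_max_left _ _) (norm_nonneg _)
  have hfin : (⨆ p : ℕ × ℕ, ENNReal.ofReal (q p e)) ≠ ⊤ :=
    (hbound.trans_lt ENNReal.ofReal_lt_top).ne
  have hgle : g e ≤ max (ℓ e) 0 := by
    calc g e ≤ (ENNReal.ofReal (max (ℓ e) 0)).toReal :=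
          ENNReal.toReal_mono ENNReal.ofReal_ne_top hbound
      _ = max (ℓ e) 0 := ENNReal.toReal_ofReal (le_max_right _ _)
  refine ⟨?_, hgle⟩
  have hg0 : 0 ≤ g e := ENNReal.toReal_nonneg
  have hqle : ∀ p : ℕ × ℕ, |φ (u p.1) e - φ (u p.2) e| ≤ g e * ‖u p.1 - u p.2‖ := by
    intro p
    by_cases hp : u p.1 = u p.2
    · simp [hp]
    · have hnorm : 0 < ‖u p.1 - u p.2‖ := by
        rw [norm_sub_pos_iff]; exact fun h => hp h
      have h1 : ENNReal.ofReal (q p e) ≤ ⨆ p : ℕ × ℕ, ENNReal.ofReal (q p e) :=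
        le_iSup (fun p : ℕ × ℕ => ENNReal.ofReal (q p e)) p
      have h2 : q p e ≤ g e := by
        have := ENNReal.toReal_mono hfin h1
        rwa [ENNReal.toReal_ofReal (hq0 p e)] at this
      have : |φ (u p.1) e - φ (u p.2) e| = q p e * ‖u p.1 - u p.2‖ := by
        rw [hq]; dsimp only; rw [div_mul_cancel₀ _ hnorm.ne']
      rw [this]
      exact mul_le_mul_of_nonneg_right h2 (norm_nonneg _)
  intro x hx x' hx'
  by_contra hcon
  push_neg at hcon
  set C : ℝ := g e + max (ℓ e) 0 with hC
  have hC0 : 0 ≤ C := add_nonneg hg0 (le_max_right _ _)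
  set η : ℝ := (|φ x e - φ x' e| - g e * ‖x - x'‖) / (2 * C + 1) with hηdef
  have hη : 0 < η := div_pos (by linarith) (by linarith)
  obtain ⟨n, hn⟩ := hdense x hx η hη
  obtain ⟨n', hn'⟩ := hdense x' hx' η hη
  have h1 : |φ x e - φ (u n) e| ≤ max (ℓ e) 0 * η := by
    calc |φ x e - φ (u n) e| ≤ ℓ e * ‖x - u n‖ := he _ hx _ (hux n)
      _ ≤ max (ℓ e) 0 * η :=
        mul_le_mul (le_max_left _ _) hn.le (norm_nonneg _) (le_max_right _ _)
  have h2 : |φ x' e - φ (u n') e| ≤ max (ℓ e) 0 * η := by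
    calc |φ x' e - φ (u n') e| ≤ ℓ e * ‖x' - u n'‖ := he _ hx' _ (hux n')
      _ ≤ max (ℓ e) 0 * η :=
        mul_le_mul (le_max_left _ _) hn'.le (norm_nonneg _) (le_max_right _ _)
  have h3 := hqle (n, n')
  have h6 : ‖u n - u n'‖ ≤ ‖x - x'‖ + 2 * η := by
    have t1 : ‖u n - u n'‖ ≤ ‖u n - x‖ + ‖x - x'‖ + ‖x' - u n'‖ := by
      have := norm_sub_le_norm_sub_add_norm_sub (u n) x (u n')
      have := norm_sub_le_norm_sub_add_norm_sub x x' (u n')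
      linarith
    have t2 : ‖u n - x‖ = ‖x - u n‖ := norm_sub_rev _ _
    linarith
  have h3' : |φ (u n) e - φ (u n') e| ≤ g e * (‖x - x'‖ + 2 * η) :=
    h3.trans (mul_le_mul_of_nonneg_left h6 hg0)
  have habs : |φ x e - φ x' e| ≤
      |φ x e - φ (u n) e| + |φ (u n) e - φ (u n') e| + |φ x' e - φ (u n') e| := by
    have t1 := abs_sub_le (φ x e) (φ (u n) e) (φ x' e)
    have t2 := abs_sub_le (φ (u n) e) (φ (u n') e) (φ x' e)
    have t3 : |φ (u n') e - φ x' e| = |φ x' e - φ (u n') e| := abs_sub_comm _ _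
    linarith
  have hfinal : |φ x e - φ x' e| ≤ g e * ‖x - x'‖ + 2 * C * η := by
    nlinarith [h1, h2, h3', habs]
  have hteq : |φ x e - φ x' e| - g e * ‖x - x'‖ = η * (2 * C + 1) := by
    rw [hηdef]; field_simp
  have : 2 * C * η < η * (2 * C + 1) := by nlinarith
  linarith

theorem saa_uniform_convergence {Ω : Type*} [MeasurableSpace Ω]
    (P : Measure Ω) [IsProbabilityMeasure P] {d k : ℕ}
    (X : Set (EuclideanSpace ℝ (Fin d))) (hX : IsCompact X)
    (ε : ℕ → Ω → EuclideanSpace ℝ (Fin k))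
    (hmeas : ∀ i, Measurable (ε i))
    (hident : ∀ i, Measure.map (ε i) P = Measure.map (ε 0) P)
    (hindep : iIndepFun ε P)
    (φ : EuclideanSpace ℝ (Fin d) → EuclideanSpace ℝ (Fin k) → ℝ)
    (hφ : Measurable (Function.uncurry φ))
    (ℓ : EuclideanSpace ℝ (Fin k) → ℝ)
    (hint : ∀ x ∈ X, Integrable (fun ω => φ x (ε 0 ω)) P)
    (hℓ : Integrable (fun ω => ℓ (ε 0 ω)) P)
    (hlip : ∀ᵐ e ∂(Measure.map (ε 0) P), ∀ x ∈ X, ∀ x' ∈ X,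
      |φ x e - φ x' e| ≤ ℓ e * ‖x - x'‖) :
    ∀ᵐ ω ∂P,
      Tendsto (fun N : ℕ =>
          ⨆ x ∈ X, |(↑N)⁻¹ * ∑ i ∈ Finset.range N, φ x (ε i ω)
            - ∫ ω', φ x (ε 0 ω') ∂P|) atTop (nhds 0) ∧
      Tendsto (fun N : ℕ =>
          ⨆ x ∈ X, (↑N)⁻¹ * ∑ i ∈ Finset.range N, φ x (ε i ω)) atTop
        (nhds (⨆ x ∈ X, ∫ ω', φ x (ε 0 ω') ∂P)) := by
  classical
  rcases X.eq_empty_or_nonempty with rfl | hXne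
  · have h0 : ∀ f : EuclideanSpace ℝ (Fin d) → ℝ,
        (⨆ x ∈ (∅ : Set (EuclideanSpace ℝ (Fin d))), f x) = 0 := by
      intro f
      have h : ∀ x : EuclideanSpace ℝ (Fin d),
          (⨆ _ : x ∈ (∅ : Set (EuclideanSpace ℝ (Fin d))), f x) = 0 := by
        intro x
        haveI : IsEmpty (x ∈ (∅ : Set (EuclideanSpace ℝ (Fin d)))) := ⟨fun h => h⟩
        exact Real.iSup_of_isEmpty _
      simp_rw [h]
      exact ciSup_const
    refine Eventually.of_forall fun ω => ⟨?_, ?_⟩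
    · simp_rw [h0]; exact tendsto_const_nhds
    · simp_rw [h0]; exact tendsto_const_nhds
  have hφx : ∀ x, Measurable fun e => φ x e := fun x => hφ.comp measurable_prodMk_left
  obtain ⟨g, hgm, hg0, hgsur⟩ := exists_lipschitz_surrogate X hX hXne φ hφ ℓ
  -- the good event on the sample space of ε
  have hG : ∀ᵐ e ∂(Measure.map (ε 0) P),
      (∀ x ∈ X, ∀ x' ∈ X, |φ x e - φ x' e| ≤ g e * ‖x - x'‖) ∧ g e ≤ max (ℓ e) 0 := by
    filter_upwards [hlip] with e he using hgsur e he
  have hGi : ∀ i, ∀ᵐ ω ∂P,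
      (∀ x ∈ X, ∀ x' ∈ X, |φ x (ε i ω) - φ x' (ε i ω)| ≤ g (ε i ω) * ‖x - x'‖) ∧
        g (ε i ω) ≤ max (ℓ (ε i ω)) 0 := by
    intro i
    exact ae_of_ae_map (hmeas i).aemeasurable (by rw [hident i]; exact hG)
  have hgint : Integrable (fun ω => g (ε 0 ω)) P := by
    refine hℓ.pos_part.mono (hgm.comp (hmeas 0)).aestronglyMeasurable ?_
    filter_upwards [hGi 0] with ω hω
    rw [Real.norm_eq_abs, abs_of_nonneg (hg0 _)]
    exact hω.2.trans (le_abs_self _)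
  set E : ℝ := ∫ ω, g (ε 0 ω) ∂P with hE
  have hE0 : 0 ≤ E := integral_nonneg fun ω => hg0 _
  -- Lipschitz modulus for the expectation
  have halip : ∀ x ∈ X, ∀ x' ∈ X,
      |(∫ ω', φ x (ε 0 ω') ∂P) - ∫ ω', φ x' (ε 0 ω') ∂P| ≤ E * ‖x - x'‖ := by
    intro x hx x' hx'
    rw [← integral_sub (hint x hx) (hint x' hx')]
    have habs : |∫ ω', (φ x (ε 0 ω') - φ x' (ε 0 ω')) ∂P|
        ≤ ∫ ω', |φ x (ε 0 ω') - φ x' (ε 0 ω')| ∂P := by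
      simpa [Real.norm_eq_abs] using
        norm_integral_le_integral_norm (fun ω' => φ x (ε 0 ω') - φ x' (ε 0 ω')) (μ := P)
    refine habs.trans ?_
    have hmono : (∫ ω', |φ x (ε 0 ω') - φ x' (ε 0 ω')| ∂P)
        ≤ ∫ ω', g (ε 0 ω') * ‖x - x'‖ ∂P := by
      refine integral_mono_ae ((hint x hx).sub (hint x' hx')).abs (hgint.mul_const _) ?_
      filter_upwards [hGi 0] with ω hω using hω.1 x hx x' hx'
    refine hmono.trans_eq ?_
    rw [integral_mul_const]
  -- strong law of large numbers at fixed points and for g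
  have hslln : ∀ x, x ∈ X → ∀ᵐ ω ∂P, Tendsto
      (fun N : ℕ => (N : ℝ)⁻¹ * ∑ i ∈ Finset.range N, φ x (ε i ω)) atTop
      (nhds (∫ ω', φ x (ε 0 ω') ∂P)) := by
    intro x hx
    have h := strong_law_ae_real (fun i ω => φ x (ε i ω)) (hint x hx)
      (fun i j hij => (hindep.indepFun hij).comp (hφx x) (hφx x))
      (fun i => (⟨(hmeas i).aemeasurable, (hmeas 0).aemeasurable, hident i⟩ :
          IdentDistrib (ε i) (ε 0) P P).comp (hφx x))
    filter_upwards [h] with ω hω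
    simpa [div_eq_inv_mul] using hω
  have hsllnG : ∀ᵐ ω ∂P, Tendsto
      (fun N : ℕ => (N : ℝ)⁻¹ * ∑ i ∈ Finset.range N, g (ε i ω)) atTop (nhds E) := by
    have h := strong_law_ae_real (fun i ω => g (ε i ω)) hgint
      (fun i j hij => (hindep.indepFun hij).comp hgm hgm)
      (fun i => (⟨(hmeas i).aemeasurable, (hmeas 0).aemeasurable, hident i⟩ :
          IdentDistrib (ε i) (ε 0) P P).comp hgm)
    filter_upwards [h] with ω hω
    simpa [div_eq_inv_mul] using hω
  -- finite covers of X
  have hcov : ∀ m : ℕ, ∃ t, t ⊆ X ∧ Set.Finite t ∧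
      X ⊆ ⋃ y ∈ t, Metric.ball y (1 / (m + 1)) := by
    intro m
    exact finite_cover_balls_of_compact hX (by positivity)
  choose T hTX hTfin hTcov using hcov
  -- combine all a.s. events
  have hae : ∀ᵐ ω ∂P,
      (∀ m : ℕ, ∀ t ∈ T m, Tendsto
        (fun N : ℕ => (N : ℝ)⁻¹ * ∑ i ∈ Finset.range N, φ t (ε i ω)) atTop
        (nhds (∫ ω', φ t (ε 0 ω') ∂P))) ∧
      Tendsto (fun N : ℕ => (N : ℝ)⁻¹ * ∑ i ∈ Finset.range N, g (ε i ω)) atTop (nhds E) ∧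
      ∀ i : ℕ, ∀ x ∈ X, ∀ x' ∈ X,
        |φ x (ε i ω) - φ x' (ε i ω)| ≤ g (ε i ω) * ‖x - x'‖ := by
    refine Eventually.and ?_ (Eventually.and hsllnG ?_)
    · rw [ae_all_iff]
      intro m
      rw [ae_ball_iff (hTfin m).countable]
      intro t ht
      exact hslln t (hTX m ht)
    · rw [ae_all_iff]
      intro i
      filter_upwards [hGi i] with ω hω using hω.1
  filter_upwards [hae] with ω hω
  obtain ⟨hcen, hLN, hlipg⟩ := hω
  set A : ℕ → EuclideanSpace ℝ (Fin d) → ℝ :=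
    fun N x => (N : ℝ)⁻¹ * ∑ i ∈ Finset.range N, φ x (ε i ω) with hA
  set al : EuclideanSpace ℝ (Fin d) → ℝ := fun x => ∫ ω', φ x (ε 0 ω') ∂P with hal
  set L : ℕ → ℝ := fun N => (N : ℝ)⁻¹ * ∑ i ∈ Finset.range N, g (ε i ω) with hL
  have hL0 : ∀ N, 0 ≤ L N := by
    intro N
    exact mul_nonneg (by positivity) (Finset.sum_nonneg fun i _ => hg0 _)
  -- Lipschitz bound on the empirical average
  have hAlip : ∀ N : ℕ, ∀ x ∈ X, ∀ x' ∈ X, |A N x - A N x'| ≤ L N * ‖x - x'‖ := by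
    intro N x hx x' hx'
    have hrw : A N x - A N x' =
        (N : ℝ)⁻¹ * ∑ i ∈ Finset.range N, (φ x (ε i ω) - φ x' (ε i ω)) := by
      rw [hA]; dsimp only; rw [Finset.sum_sub_distrib, mul_sub]
    rw [hrw, abs_mul, abs_of_nonneg (by positivity : (0:ℝ) ≤ (N:ℝ)⁻¹)]
    calc (N : ℝ)⁻¹ * |∑ i ∈ Finset.range N, (φ x (ε i ω) - φ x' (ε i ω))|
        ≤ (N : ℝ)⁻¹ * ∑ i ∈ Finset.range N, |φ x (ε i ω) - φ x' (ε i ω)| :=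
          mul_le_mul_of_nonneg_left (Finset.abs_sum_le_sum_abs _ _) (by positivity)
      _ ≤ (N : ℝ)⁻¹ * ∑ i ∈ Finset.range N, g (ε i ω) * ‖x - x'‖ :=
          mul_le_mul_of_nonneg_left
            (Finset.sum_le_sum fun i _ => hlipg i x hx x' hx') (by positivity)
      _ = L N * ‖x - x'‖ := by rw [hL]; dsimp only; rw [← Finset.sum_mul, mul_assoc]
  -- key covering estimate
  have hkey : ∀ m N : ℕ, ∀ x ∈ X, ∃ t ∈ T m,
      |A N x - al x| ≤ |A N t - al t| + (1 / (m + 1)) * (L N + E) := by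
    intro m N x hx
    obtain ⟨t, ht, hxt⟩ := Set.mem_iUnion₂.1 (hTcov m hx)
    refine ⟨t, ht, ?_⟩
    have htX := hTX m ht
    have hd : ‖x - t‖ < 1 / (m + 1) := by
      rw [Metric.mem_ball, dist_eq_norm] at hxt; exact hxt
    have h1 : |A N x - A N t| ≤ L N * (1 / (m + 1)) :=
      (hAlip N x hx t htX).trans (mul_le_mul_of_nonneg_left hd.le (hL0 N))
    have h2 : |al x - al t| ≤ E * (1 / (m + 1)) :=
      (halip x hx t htX).trans (mul_le_mul_of_nonneg_left hd.le hE0)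
    have t1 := abs_sub_le (A N x) (A N t) (al x)
    have t2 := abs_sub_le (A N t) (al t) (al x)
    have t3 : |al t - al x| = |al x - al t| := abs_sub_comm _ _
    have expand : (1 / ((m:ℝ) + 1)) * (L N + E) = L N * (1/(m+1)) + E * (1/(m+1)) := by ring
    linarith
  -- the uniform error
  have hSnonneg : ∀ N, 0 ≤ ⨆ x ∈ X, |A N x - al x| := fun N =>
    Real.iSup_nonneg fun x => Real.iSup_nonneg fun _ => abs_nonneg _
  -- the first convergence
  have hTend1 : Tendsto (fun N : ℕ => ⨆ x ∈ X, |A N x - al x|) atTop (nhds 0) := by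
    rw [Metric.tendsto_atTop]
    intro η hη
    obtain ⟨m, hm⟩ := exists_nat_gt ((2 * E + 1) * (2 / η))
    have hm1 : (0:ℝ) < m + 1 := by positivity
    have hmm : (1 / ((m:ℝ) + 1)) * (2 * E + 1) < η / 2 := by
      rw [div_mul_eq_mul_div, one_mul, div_lt_iff₀ hm1]
      have h1 : (2 * E + 1) * (2 / η) * (η / 2) < (m : ℝ) * (η / 2) :=
        mul_lt_mul_of_pos_right hm (by positivity)
      have h2 : (2 * E + 1) * (2 / η) * (η / 2) = 2 * E + 1 := by field_simp
      have h3 : (m : ℝ) * (η / 2) < η / 2 * ((m : ℝ) + 1) := by nlinarith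
      linarith
    have ev1 : ∀ᶠ N : ℕ in atTop, ∀ t ∈ T m, |A N t - al t| < η / 4 := by
      rw [eventually_all_finite (hTfin m)]
      intro t ht
      have := Metric.tendsto_atTop.1 (hcen m t ht) (η / 4) (by positivity)
      obtain ⟨N₀, hN₀⟩ := this
      rw [eventually_atTop]
      exact ⟨N₀, fun n hn => by have := hN₀ n hn; rwa [Real.dist_eq] at this⟩
    have ev2 : ∀ᶠ N : ℕ in atTop, L N ≤ E + 1 := by
      have := Metric.tendsto_atTop.1 hLN 1 one_pos
      obtain ⟨N₀, hN₀⟩ := this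
      rw [eventually_atTop]
      refine ⟨N₀, fun n hn => ?_⟩
      have := hN₀ n hn
      rw [Real.dist_eq, abs_lt] at this
      linarith [this.2]
    have hfin : ∀ᶠ N : ℕ in atTop, dist (⨆ x ∈ X, |A N x - al x|) 0 < η := by
      filter_upwards [ev1, ev2] with N h1 h2
      have hb0 : (0:ℝ) ≤ η / 4 + (1 / (m + 1)) * (L N + E) :=
        add_nonneg (by positivity)
          (mul_nonneg (by positivity) (add_nonneg (hL0 N) hE0))
      have hSle : (⨆ x ∈ X, |A N x - al x|) ≤ η / 4 + (1 / (m + 1)) * (L N + E) := by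
        refine Real.iSup_le (fun x => Real.iSup_le (fun hx => ?_) hb0) hb0
        obtain ⟨t, ht, hbd⟩ := hkey m N x hx
        have := (h1 t ht).le
        linarith
      have hstep : (1 / ((m:ℝ) + 1)) * (L N + E) ≤ (1 / (m + 1)) * (2 * E + 1) :=
        mul_le_mul_of_nonneg_left (by linarith) (by positivity)
      rw [Real.dist_eq, sub_zero, abs_of_nonneg (hSnonneg N)]
      linarith
    rw [Metric.tendsto_atTop] at *
    obtain ⟨N₀, hN₀⟩ := eventually_atTop.1 hfin
    exact ⟨N₀, hN₀⟩
  refine ⟨hTend1, ?_⟩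
  -- second convergence: convergence of suprema
  -- an upper bound for al on X
  set T0 : Finset (EuclideanSpace ℝ (Fin d)) := (hTfin 0).toFinset with hT0
  have hT0ne : T0.Nonempty := by
    obtain ⟨x0, hx0⟩ := hXne
    obtain ⟨t, ht, _⟩ := Set.mem_iUnion₂.1 (hTcov 0 hx0)
    exact ⟨t, (hTfin 0).mem_toFinset.2 ht⟩
  have hone : (1 : ℝ) / ((0:ℕ) + 1) = 1 := by norm_num
  set Cα : ℝ := T0.sup' hT0ne al + E with hCα
  have hCαle : ∀ x ∈ X, al x ≤ Cα := by
    intro x hx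
    obtain ⟨t, ht, hxt⟩ := Set.mem_iUnion₂.1 (hTcov 0 hx)
    have htX := hTX 0 ht
    have hd : ‖x - t‖ < 1 := by
      rw [Metric.mem_ball, dist_eq_norm] at hxt
      calc ‖x - t‖ < 1 / ((0:ℕ) + 1) := hxt
        _ = 1 := hone
    have h2 : |al x - al t| ≤ E * ‖x - t‖ := halip x hx t htX
    have h2' : E * ‖x - t‖ ≤ E * 1 := mul_le_mul_of_nonneg_left hd.le hE0
    have h3 : al t ≤ T0.sup' hT0ne al := Finset.le_sup' al ((hTfin 0).mem_toFinset.2 ht)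
    have := abs_le.1 h2
    rw [hCα]
    linarith [this.1]
  -- uniform bound on the error for each fixed N
  have hBN : ∀ N, ∀ x ∈ X, |A N x - al x| ≤
      T0.sup' hT0ne (fun t => |A N t - al t|) + (L N + E) := by
    intro N x hx
    obtain ⟨t, ht, hbd⟩ := hkey 0 N x hx
    have h3 : |A N t - al t| ≤ T0.sup' hT0ne (fun t => |A N t - al t|) :=
      Finset.le_sup' (fun t => |A N t - al t|) ((hTfin 0).mem_toFinset.2 ht)
    rw [hone, one_mul] at hbd
    linarith
  -- |A N x - al x| ≤ S N for x ∈ X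
  have hSbdd : ∀ N, BddAbove (Set.range fun x => ⨆ _ : x ∈ X, |A N x - al x|) := by
    intro N
    refine ⟨max ((T0.sup' hT0ne fun t => |A N t - al t|) + (L N + E)) 0, ?_⟩
    rintro y ⟨x, rfl⟩
    dsimp only
    by_cases hx : x ∈ X
    · rw [ciSup_pos hx]
      exact (hBN N x hx).trans (le_max_left _ _)
    · haveI : IsEmpty (x ∈ X) := ⟨hx⟩
      rw [Real.iSup_of_isEmpty]
      exact le_max_right _ _
  have hSub : ∀ N, ∀ x ∈ X, |A N x - al x| ≤ ⨆ x ∈ X, |A N x - al x| := by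
    intro N x hx
    exact le_ciSup_of_le (hSbdd N) x
      (le_of_eq (ciSup_pos (f := fun _ : x ∈ X => |A N x - al x|) hx).symm)
  have hαbdd : BddAbove (Set.range fun x => ⨆ _ : x ∈ X, al x) := by
    refine ⟨max Cα 0, ?_⟩
    rintro y ⟨x, rfl⟩
    dsimp only
    by_cases hx : x ∈ X
    · rw [ciSup_pos hx]
      exact (hCαle x hx).trans (le_max_left _ _)
    · haveI : IsEmpty (x ∈ X) := ⟨hx⟩
      rw [Real.iSup_of_isEmpty]
      exact le_max_right _ _
  have hAbdd : ∀ N, BddAbove (Set.range fun x => ⨆ _ : x ∈ X, A N x) := by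
    intro N
    refine ⟨max (Cα + max ((T0.sup' hT0ne fun t => |A N t - al t|) + (L N + E)) 0) 0, ?_⟩
    rintro y ⟨x, rfl⟩
    dsimp only
    by_cases hx : x ∈ X
    · rw [ciSup_pos hx]
      have h1 := hBN N x hx
      have h2 := hCαle x hx
      have h3 := abs_le.1 h1
      refine le_max_of_le_left ?_
      have h5 : A N x - al x ≤ max ((T0.sup' hT0ne fun t => |A N t - al t|) + (L N + E)) 0 :=
        le_trans (by linarith [h3.2]) (le_max_left _ _)
      linarith
    · haveI : IsEmpty (x ∈ X) := ⟨hx⟩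
      rw [Real.iSup_of_isEmpty]
      exact le_max_right _ _
  have h2a : ∀ N, (⨆ x ∈ X, A N x) ≤ (⨆ x ∈ X, al x) + ⨆ x ∈ X, |A N x - al x| := by
    intro N
    refine ciSup_le fun x => ?_
    by_cases hx : x ∈ X
    · rw [ciSup_pos hx]
      have h1 := abs_le.1 (hSub N x hx)
      have h2 : al x ≤ ⨆ x ∈ X, al x := le_ciSup_of_le hαbdd x
        (le_of_eq (ciSup_pos (f := fun _ : x ∈ X => al x) hx).symm)
      linarith [h1.2]
    · haveI : IsEmpty (x ∈ X) := ⟨hx⟩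
      rw [Real.iSup_of_isEmpty]
      have h4 : (0:ℝ) ≤ ⨆ x ∈ X, al x :=
        le_ciSup_of_le hαbdd x (le_of_eq (Real.iSup_of_isEmpty (fun _ : x ∈ X => al x)).symm)
      linarith [hSnonneg N]
  have h2b : ∀ N, (⨆ x ∈ X, al x) ≤ (⨆ x ∈ X, A N x) + ⨆ x ∈ X, |A N x - al x| := by
    intro N
    refine ciSup_le fun x => ?_
    by_cases hx : x ∈ X
    · rw [ciSup_pos hx]
      have h1 := abs_le.1 (hSub N x hx)
      have h2 : A N x ≤ ⨆ x ∈ X, A N x := le_ciSup_of_le (hAbdd N) x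
        (le_of_eq (ciSup_pos (f := fun _ : x ∈ X => A N x) hx).symm)
      linarith [h1.1]
    · haveI : IsEmpty (x ∈ X) := ⟨hx⟩
      rw [Real.iSup_of_isEmpty]
      have h2 : (0:ℝ) ≤ ⨆ x ∈ X, A N x :=
        le_ciSup_of_le (hAbdd N) x (le_of_eq (Real.iSup_of_isEmpty (fun _ : x ∈ X => A N x)).symm)
      linarith [hSnonneg N]
  have hdist : ∀ N, |(⨆ x ∈ X, A N x) - ⨆ x ∈ X, al x| ≤ ⨆ x ∈ X, |A N x - al x| := by
    intro N
    rw [abs_sub_le_iff]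
    exact ⟨by linarith [h2a N], by linarith [h2b N]⟩
  rw [tendsto_iff_dist_tendsto_zero]
  refine squeeze_zero (fun N => dist_nonneg) (fun N => ?_) hTend1
  rw [Real.dist_eq]
  exact hdist N
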